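/- Let α ∈ ℝ, set λ := √(1 + α²), and let η : I → ℝ be a maximal C² solution of the ODE (1 + α²)·η'' = 1 + α² + (η')² on an open interval I. Then there exist x₀ ∈ ℝ and c ∈ ℝ such that I = (x₀ − λπ/2, x₀ + λπ/2) and η(x) = λ²·log(sec((x − x₀)/λ)) + c for all x ∈ I. -/

import Mathlib

open Real Filter

private lemma eqOn_of_hasDerivAt_eq {I : Set ℝ} (hI : IsOpen I) (hc : Convex ℝ I)
    {f g f' : ℝ → ℝ} (hf : ∀ x ∈ I, HasDerivAt f (f' x) x)
    (hg : ∀ x ∈ I, HasDerivAt g (f' x) x) {a : ℝ} (ha : a ∈ I) (hfa : f a = g a) :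
    Set.EqOn f g I := by
  refine hc.eqOn_of_fderivWithin_eq
    (fun x hx => ((hf x hx).differentiableAt).differentiableWithinAt)
    (fun x hx => ((hg x hx).differentiableAt).differentiableWithinAt)
    hI.uniqueDiffOn ?_ ha hfa
  intro x hx
  rw [fderivWithin_of_isOpen hI hx, fderivWithin_of_isOpen hI hx,
    (hf x hx).hasFDerivAt.fderiv, (hg x hx).hasFDerivAt.fderiv]

/-- Let `λ = √(1+α²)` and let `η` be a maximal `C²` solution of
`(1+α²) η'' = 1 + α² + (η')²` on an open interval `I`.  Then `I` is an interval of
length `λπ` centered at some `x₀` and `η(x) = λ² log sec((x−x₀)/λ) + c` on `I`. -/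
theorem grim_ode_classification (α : ℝ) (I : Set ℝ)
    (hI : IsOpen I) (hne : I.Nonempty) (hord : I.OrdConnected)
    (η : ℝ → ℝ) (hη : ContDiffOn ℝ 2 η I)
    (hode : ∀ x ∈ I, (1 + α ^ 2) * deriv (deriv η) x = 1 + α ^ 2 + (deriv η x) ^ 2)
    (hmax : ∀ (J : Set ℝ) (ζ : ℝ → ℝ), IsOpen J → J.OrdConnected → I ⊆ J →
      ContDiffOn ℝ 2 ζ J → (∀ x ∈ I, ζ x = η x) →
      (∀ x ∈ J, (1 + α ^ 2) * deriv (deriv ζ) x = 1 + α ^ 2 + (deriv ζ x) ^ 2) → J = I) :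
    ∃ x₀ c : ℝ,
      I = Set.Ioo (x₀ - Real.sqrt (1 + α ^ 2) * π / 2) (x₀ + Real.sqrt (1 + α ^ 2) * π / 2) ∧
      ∀ x ∈ I, η x =
        (1 + α ^ 2) * Real.log (1 / Real.cos ((x - x₀) / Real.sqrt (1 + α ^ 2))) + c := by
  set lam : ℝ := Real.sqrt (1 + α ^ 2) with hlamdef
  have hα : (0:ℝ) < 1 + α ^ 2 := by positivity
  have hlam2 : lam ^ 2 = 1 + α ^ 2 := Real.sq_sqrt hα.le
  have hlampos : 0 < lam := Real.sqrt_pos.mpr hα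
  have hlamne : lam ≠ 0 := hlampos.ne'
  have hconv : Convex ℝ I := hord.convex
  obtain ⟨a, ha⟩ := hne
  -- derivatives of η
  have hd1 : DifferentiableOn ℝ η I := hη.differentiableOn (by norm_num)
  have hdv : ContDiffOn ℝ 1 (deriv η) I := hη.deriv_of_isOpen hI (by norm_num)
  have hd2 : DifferentiableOn ℝ (deriv η) I := hdv.differentiableOn one_ne_zero
  set v : ℝ → ℝ := deriv η with hvdef
  have hva : ∀ x ∈ I, HasDerivAt η (v x) x := fun x hx =>
    (hd1.differentiableAt (hI.mem_nhds hx)).hasDerivAt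
  have hvd : ∀ x ∈ I, HasDerivAt v (deriv v x) x := fun x hx =>
    (hd2.differentiableAt (hI.mem_nhds hx)).hasDerivAt
  have hodev : ∀ x ∈ I, deriv v x = 1 + (v x) ^ 2 / (1 + α ^ 2) := by
    intro x hx
    have h := hode x hx
    field_simp
    linarith
  -- g = arctan (v/lam) has derivative 1/lam on I
  set g : ℝ → ℝ := fun x => Real.arctan (v x / lam) with hgdef
  have hg : ∀ x ∈ I, HasDerivAt g (1 / lam) x := by
    intro x hx
    have h1 : HasDerivAt (fun y => v y / lam) (deriv v x / lam) x := (hvd x hx).div_const lam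
    have h2 : HasDerivAt g (1 / (1 + (v x / lam) ^ 2) * (deriv v x / lam)) x :=
      by have := (Real.hasDerivAt_arctan (v x / lam)).comp x h1; exact this
    convert h2 using 1
    rw [hodev x hx, div_pow, hlam2]
    have hpos : (0:ℝ) < 1 + (v x) ^ 2 / (1 + α ^ 2) := by positivity
    field_simp
  set x₀ : ℝ := a - lam * g a with hx₀def
  have hgeq : ∀ x ∈ I, g x = (x - x₀) / lam := by
    intro x hx
    have := eqOn_of_hasDerivAt_eq (g := fun y => (y - x₀) / lam) hI hconv
      (f' := fun _ => 1 / lam) hg ?_ ha ?_ hx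
    · simpa using this
    · intro y hy
      simpa using ((hasDerivAt_id y).sub_const x₀).div_const lam
    · rw [hx₀def]
      field_simp
      ring
  -- I ⊆ J
  set J : Set ℝ := Set.Ioo (x₀ - lam * π / 2) (x₀ + lam * π / 2) with hJdef
  have hsub : I ⊆ J := by
    intro x hx
    have h1 := Real.neg_pi_div_two_lt_arctan (v x / lam)
    have h2 := Real.arctan_lt_pi_div_two (v x / lam)
    rw [show Real.arctan (v x / lam) = g x from rfl, hgeq x hx] at h1 h2
    rw [div_lt_iff₀ hlampos] at h2
    rw [lt_div_iff₀ hlampos] at h1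
    constructor <;> [nlinarith; nlinarith]
  have hJopen : IsOpen J := isOpen_Ioo
  have hJord : J.OrdConnected := Set.ordConnected_Ioo
  -- cos positive on J
  have hcospos : ∀ x ∈ J, 0 < Real.cos ((x - x₀) / lam) := by
    intro x hx
    apply Real.cos_pos_of_mem_Ioo
    obtain ⟨h1, h2⟩ := hx
    constructor
    · rw [lt_div_iff₀ hlampos]; nlinarith
    · rw [div_lt_iff₀ hlampos]; nlinarith
  -- definition of ζ
  set c : ℝ := η a - (1 + α ^ 2) * Real.log (1 / Real.cos ((a - x₀) / lam)) with hcdef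
  set ζ : ℝ → ℝ := fun x => (1 + α ^ 2) * Real.log (1 / Real.cos ((x - x₀) / lam)) + c
    with hζdef
  have hu : ∀ x : ℝ, HasDerivAt (fun y => (y - x₀) / lam) (1 / lam) x := fun x => by
    simpa using ((hasDerivAt_id x).sub_const x₀).div_const lam
  have hcosd : ∀ x : ℝ, HasDerivAt (fun y => Real.cos ((y - x₀) / lam))
      (-Real.sin ((x - x₀) / lam) * (1 / lam)) x := fun x =>
    by have := (Real.hasDerivAt_cos ((x - x₀) / lam)).comp x (hu x); exact this
  have hζd : ∀ x ∈ J, HasDerivAt ζ (lam * Real.tan ((x - x₀) / lam)) x := by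
    intro x hx
    have hwx : Real.cos ((x - x₀) / lam) ≠ 0 := (hcospos x hx).ne'
    have h3 : HasDerivAt (fun y => 1 / Real.cos ((y - x₀) / lam))
        ((0 * Real.cos ((x - x₀) / lam) - 1 * (-Real.sin ((x - x₀) / lam) * (1 / lam))) /
          Real.cos ((x - x₀) / lam) ^ 2) x :=
      (hasDerivAt_const x (1:ℝ)).div (hcosd x) hwx
    have h4 : 1 / Real.cos ((x - x₀) / lam) ≠ 0 := one_div_ne_zero hwx
    have h5 := ((h3.log h4).const_mul (1 + α ^ 2)).add_const c
    refine h5.congr_deriv ?_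
    rw [Real.tan_eq_sin_div_cos, ← hlam2]
    field_simp
    ring
  have hζderiv : ∀ x ∈ J, deriv ζ x = lam * Real.tan ((x - x₀) / lam) := fun x hx =>
    (hζd x hx).deriv
  have hζdd : ∀ x ∈ J, HasDerivAt (deriv ζ)
      (lam * (1 / Real.cos ((x - x₀) / lam) ^ 2 * (1 / lam))) x := by
    intro x hx
    have hwx : Real.cos ((x - x₀) / lam) ≠ 0 := (hcospos x hx).ne'
    have h1 : HasDerivAt (fun y => lam * Real.tan ((y - x₀) / lam))
        (lam * (1 / Real.cos ((x - x₀) / lam) ^ 2 * (1 / lam))) x :=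
      by have := ((Real.hasDerivAt_tan hwx).comp x (hu x)).const_mul lam; exact this
    apply h1.congr_of_eventuallyEq
    filter_upwards [hJopen.mem_nhds hx] with y hy
    exact hζderiv y hy
  -- ζ solves the ODE on J
  have hζode : ∀ x ∈ J, (1 + α ^ 2) * deriv (deriv ζ) x = 1 + α ^ 2 + (deriv ζ x) ^ 2 := by
    intro x hx
    have hwx : Real.cos ((x - x₀) / lam) ≠ 0 := (hcospos x hx).ne'
    rw [(hζdd x hx).deriv, hζderiv x hx, Real.tan_eq_sin_div_cos, ← hlam2]
    have hsc := Real.sin_sq_add_cos_sq ((x - x₀) / lam)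
    field_simp
    linear_combination (-1 : ℝ) * hsc
  -- ζ is C² on J
  have hζcd : ContDiffOn ℝ 2 ζ J := by
    have h1 : ContDiffOn ℝ 2 (fun x : ℝ => Real.cos ((x - x₀) / lam)) J :=
      (Real.contDiff_cos.comp ((contDiff_id.sub contDiff_const).div_const lam)).contDiffOn
    have h2 : ContDiffOn ℝ 2 (fun x : ℝ => 1 / Real.cos ((x - x₀) / lam)) J :=
      contDiffOn_const.div h1 (fun x hx => (hcospos x hx).ne')
    have h3 : ContDiffOn ℝ 2 (fun x : ℝ => Real.log (1 / Real.cos ((x - x₀) / lam))) J :=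
      h2.log (fun x hx => one_div_ne_zero (hcospos x hx).ne')
    exact (contDiffOn_const.mul h3).add contDiffOn_const
  -- ζ = η on I
  have hζv : ∀ x ∈ I, HasDerivAt ζ (v x) x := by
    intro x hx
    have h1 := hζd x (hsub hx)
    have h2 : lam * Real.tan ((x - x₀) / lam) = v x := by
      rw [← hgeq x hx, hgdef]
      simp only [Real.tan_arctan]
      field_simp
    rwa [h2] at h1
  have hEq : Set.EqOn ζ η I := by
    refine eqOn_of_hasDerivAt_eq hI hconv (f' := v) hζv hva ha ?_
    rw [hζdef, hcdef]; ring
  -- maximality : J = I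
  have hJI : J = I := hmax J ζ hJopen hJord hsub hζcd (fun x hx => hEq hx) hζode
  refine ⟨x₀, c, hJI.symm, fun x hx => ?_⟩
  rw [← hEq hx]
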